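/- For every q ∈ (0,1), every L ≥ 1 and every z ∈ ℂ, the kink product vector φ(z) = ⊗_{x=0}^{L}(|↑⟩ + z q^x |↓⟩) satisfies H_L φ(z) = 0; moreover H_L is positive semidefinite, so 0 is the smallest eigenvalue of H_L and every φ(z) is a ground state vector of H_L. -/

import Mathlib

open Matrix Kronecker ComplexOrder

noncomputable section

/-- Spin-1/2 matrix `S¹ = (1/2)[[0,1],[1,0]]`. -/
def S1 : Matrix (Fin 2) (Fin 2) ℂ := !![0, 1/2; 1/2, 0]

/-- Spin-1/2 matrix `S² = (1/2)[[0,−i],[i,0]]`. -/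
def S2 : Matrix (Fin 2) (Fin 2) ℂ := !![0, -Complex.I/2; Complex.I/2, 0]

/-- Spin-1/2 matrix `S³ = (1/2)[[1,0],[0,−1]]`. -/
def S3 : Matrix (Fin 2) (Fin 2) ℂ := !![1/2, 0; 0, -1/2]

/-- The anisotropy `Δ = (q + q⁻¹)/2`. -/
def Delta (q : ℝ) : ℝ := (q + q⁻¹) / 2

/-- The boundary field `B = (1 − q²)/(2(1 + q²)) = (1/2)√(1 − 1/Δ²)`. -/
def Bfield (q : ℝ) : ℝ := (1 - q ^ 2) / (2 * (1 + q ^ 2))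

/-- The two-site kink Hamiltonian
`h(Δ) = (1/4)·𝟙⊗𝟙 − S³⊗S³ − Δ⁻¹(S¹⊗S¹ + S²⊗S²) + B(S³⊗𝟙 − 𝟙⊗S³)` on `ℂ²⊗ℂ²`. -/
def hKink (q : ℝ) : Matrix (Fin 2 × Fin 2) (Fin 2 × Fin 2) ℂ :=
  (1 / 4 : ℂ) • (1 : Matrix (Fin 2 × Fin 2) (Fin 2 × Fin 2) ℂ)
    - S3 ⊗ₖ S3 - ((Delta q : ℂ))⁻¹ • (S1 ⊗ₖ S1 + S2 ⊗ₖ S2)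
    + (Bfield q : ℂ) • (S3 ⊗ₖ (1 : Matrix (Fin 2) (Fin 2) ℂ)
        - (1 : Matrix (Fin 2) (Fin 2) ℂ) ⊗ₖ S3)

/-- The operator acting as the two-site matrix `M` on the tensor factors of the sites
`a` and `b` (in this order) and as the identity on all other factors. -/
def twoSiteOp {ι : Type*} [Fintype ι] [DecidableEq ι]
    (M : Matrix (Fin 2 × Fin 2) (Fin 2 × Fin 2) ℂ) (a b : ι) :
    Matrix (ι → Fin 2) (ι → Fin 2) ℂ :=
  fun σ τ => M (σ a, σ b) (τ a, τ b) *
    (if ∀ y, y ≠ a → y ≠ b → σ y = τ y then 1 else 0)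

/-- The operator acting as the one-site matrix `A` on the tensor factor of the site `a`
and as the identity on all other factors. -/
def siteOp {ι : Type*} [Fintype ι] [DecidableEq ι]
    (A : Matrix (Fin 2) (Fin 2) ℂ) (a : ι) : Matrix (ι → Fin 2) (ι → Fin 2) ℂ :=
  fun σ τ => A (σ a) (τ a) * (if ∀ y, y ≠ a → σ y = τ y then 1 else 0)

/-- The finite XXZ kink chain Hamiltonian `H_L = Σ_{x=0}^{L−1} h(Δ)_{x,x+1}`
on `(ℂ²)^{⊗(L+1)}` (sites `0,…,L`). -/
def HChain (L : ℕ) (q : ℝ) : Matrix (Fin (L + 1) → Fin 2) (Fin (L + 1) → Fin 2) ℂ :=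
  ∑ x : Fin L, twoSiteOp (hKink q) x.castSucc x.succ

/-- The kink product vector `φ(z) = ⊗_{x=0}^{L}(|↑⟩ + z q^x |↓⟩)`. -/
def phi (L : ℕ) (q : ℝ) (z : ℂ) : (Fin (L + 1) → Fin 2) → ℂ :=
  fun σ => ∏ x : Fin (L + 1), (![1, z * (q : ℂ) ^ (x : ℕ)] : Fin 2 → ℂ) (σ x)

/-- The total third component of the spin, `S³_tot = Σ_{x=0}^{L} S³_x`. -/
def S3tot (L : ℕ) : Matrix (Fin (L + 1) → Fin 2) (Fin (L + 1) → Fin 2) ℂ :=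
  ∑ x : Fin (L + 1), siteOp S3 x

/-! ### Auxiliary lemmas -/

lemma posSemidef_outer {n : Type*} [Fintype n] [DecidableEq n] (v : n → ℂ) :
    Matrix.PosSemidef (Matrix.vecMulVec (star v) v) := by
  have : Matrix.vecMulVec (star v) v = (Matrix.replicateRow Unit v)ᴴ * Matrix.replicateRow Unit v := by
    ext i j
    simp [Matrix.vecMulVec_apply, Matrix.mul_apply, Matrix.replicateRow_apply, Matrix.conjTranspose_apply]
  rw [this]
  exact Matrix.posSemidef_conjTranspose_mul_self _

lemma conjTranspose_kronecker {l m n p : Type*} (A : Matrix l m ℂ) (B : Matrix n p ℂ) :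
    (A ⊗ₖ B)ᴴ = Aᴴ ⊗ₖ Bᴴ := by
  ext ⟨i, j⟩ ⟨k, l⟩
  simp [Matrix.conjTranspose_apply, Matrix.kroneckerMap_apply, mul_comm]

/-- The rank one factor of `hKink`. -/
def kinkVec (q c : ℝ) : Fin 2 × Fin 2 → ℂ :=
  fun p => if p = (0, 1) then (c : ℂ) else if p = (1, 0) then (-(q * c) : ℝ) else 0

section hKinkFacts

variable (q : ℝ)

lemma deltaC_ne_zero (hq : 0 < q) : (Delta q : ℂ) ≠ 0 := by
  have hq0 : (q : ℂ) ≠ 0 := by exact_mod_cast hq.ne'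
  have hD : (Delta q : ℂ) = ((q : ℂ) + (q : ℂ)⁻¹) / 2 := by push_cast [Delta]; ring
  rw [hD]; field_simp; intro h
  have h' : (q:ℂ)^2 = -1 := by
    rcases div_eq_zero_iff.mp h with h | h
    · linear_combination h
    · exact absurd h (mul_ne_zero hq0 two_ne_zero)
  have h'' : ((q^2 : ℝ) : ℂ) = ((-1 : ℝ) : ℂ) := by push_cast; linear_combination h'
  have := Complex.ofReal_inj.mp h''
  nlinarith

set_option maxHeartbeats 1000000 in
lemma hKink_eq' (c : ℝ) (hq : 0 < q) (key : (c:ℂ) * (c:ℂ) * (1 + (q:ℂ)^2) = 1) :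
    hKink q = Matrix.vecMulVec (star (kinkVec q c)) (kinkVec q c) := by
  have h2 : (0:ℝ) < 1 + q ^ 2 := by positivity
  have hq0 : (q : ℂ) ≠ 0 := by exact_mod_cast hq.ne'
  have h2C : (1 : ℂ) + (q : ℂ) ^ 2 ≠ 0 := by exact_mod_cast h2.ne'
  have hD : (Delta q : ℂ) = ((q : ℂ) + (q : ℂ)⁻¹) / 2 := by push_cast [Delta]; ring
  have hB : (Bfield q : ℂ) = (1 - (q:ℂ) ^ 2) / (2 * (1 + (q:ℂ) ^ 2)) := by
    push_cast [Bfield]; ring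
  have hDne : (Delta q : ℂ) ≠ 0 := deltaC_ne_zero q hq
  ext ⟨i, j⟩ ⟨k, l⟩
  fin_cases i <;> fin_cases j <;> fin_cases k <;> fin_cases l <;>
    simp [hKink, kinkVec, Matrix.vecMulVec_apply, S1, S2, S3, Matrix.kroneckerMap_apply,
      Matrix.one_apply, Prod.ext_iff, hD, hB] <;>
    field_simp <;>
    (first
      | (linear_combination (-32 : ℂ) * key)
      | (linear_combination (16*(q:ℂ)*((q:ℂ)^2+1)) * key)
      | (linear_combination (-64*(q:ℂ)^2) * key)
      | (linear_combination (-16 : ℂ) * key)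
      | (norm_num; linear_combination (-2 : ℂ) * key)
      | (linear_combination (-16*(q:ℂ)^2) * key)
      | norm_num)

lemma hKink_eq (hq : 0 < q) :
    hKink q = Matrix.vecMulVec (star (kinkVec q (Real.sqrt (1 + q ^ 2)⁻¹)))
      (kinkVec q (Real.sqrt (1 + q ^ 2)⁻¹)) := by
  have h2 : (0:ℝ) < 1 + q ^ 2 := by positivity
  refine hKink_eq' q _ hq ?_
  have : (Real.sqrt (1 + q ^ 2)⁻¹ : ℝ) * Real.sqrt (1 + q ^ 2)⁻¹ = (1 + q ^ 2)⁻¹ :=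
    Real.mul_self_sqrt (by positivity)
  rw [← Complex.ofReal_mul, this]
  push_cast
  field_simp

lemma hKink_posSemidef (hq : 0 < q) : (hKink q).PosSemidef := by
  rw [hKink_eq q hq]; exact posSemidef_outer _

set_option maxHeartbeats 1000000 in
lemma hKink_mulVec (hq : 0 < q) (c : ℂ) :
    (hKink q) *ᵥ (fun p => (![1, c] : Fin 2 → ℂ) p.1 * (![1, (q:ℂ) * c] : Fin 2 → ℂ) p.2)
      = 0 := by
  have h2 : (0:ℝ) < 1 + q ^ 2 := by positivity
  have hq0 : (q : ℂ) ≠ 0 := by exact_mod_cast hq.ne'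
  have h2C : (1 : ℂ) + (q : ℂ) ^ 2 ≠ 0 := by exact_mod_cast h2.ne'
  have hD : (Delta q : ℂ) = ((q : ℂ) + (q : ℂ)⁻¹) / 2 := by push_cast [Delta]; ring
  have hB : (Bfield q : ℂ) = (1 - (q:ℂ) ^ 2) / (2 * (1 + (q:ℂ) ^ 2)) := by
    push_cast [Bfield]; ring
  have hDne : (Delta q : ℂ) ≠ 0 := deltaC_ne_zero q hq
  funext p
  fin_cases p <;>
    simp [Matrix.mulVec, dotProduct, Fintype.sum_prod_type, Fin.sum_univ_two,
      hKink, S1, S2, S3, Matrix.kroneckerMap_apply, Matrix.one_apply, hD, hB] <;>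
    field_simp <;>
    ring_nf <;>
    norm_num [Prod.ext_iff]

end hKinkFacts

section TwoSite

variable {ι : Type*} [Fintype ι] [DecidableEq ι]

/-- Reindexing equivalence splitting off two distinct sites. -/
def siteEquiv (a b : ι) (hab : a ≠ b) :
    (ι → Fin 2) ≃ (Fin 2 × Fin 2) × ({y : ι // y ≠ a ∧ y ≠ b} → Fin 2) where
  toFun σ := ((σ a, σ b), fun y => σ y.1)
  invFun p := fun y => if h : y = a then p.1.1 else if h' : y = b then p.1.2 else p.2 ⟨y, h, h'⟩
  left_inv σ := by
    funext y
    by_cases h : y = a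
    · subst h; simp
    · by_cases h' : y = b
      · subst h'; simp [hab.symm]
      · simp [h, h']
  right_inv p := by
    ext y
    · simp [hab]
    · simp [hab, hab.symm]
    · simp [y.2.1, y.2.2]

lemma twoSiteOp_eq (M : Matrix (Fin 2 × Fin 2) (Fin 2 × Fin 2) ℂ) (a b : ι) (hab : a ≠ b) :
    twoSiteOp M a b
      = (M ⊗ₖ (1 : Matrix ({y : ι // y ≠ a ∧ y ≠ b} → Fin 2)
          ({y : ι // y ≠ a ∧ y ≠ b} → Fin 2) ℂ)).submatrix
            (siteEquiv a b hab) (siteEquiv a b hab) := by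
  ext σ τ
  simp only [twoSiteOp, Matrix.submatrix_apply, Matrix.kroneckerMap_apply, siteEquiv,
    Equiv.coe_fn_mk, Matrix.one_apply]
  congr 1
  have : (∀ y, y ≠ a → y ≠ b → σ y = τ y)
      ↔ ((fun (y : {y : ι // y ≠ a ∧ y ≠ b}) => σ y.1) = fun y => τ y.1) := by
    constructor
    · intro h; funext y; exact h y.1 y.2.1 y.2.2
    · intro h y h1 h2; exact congrFun h ⟨y, h1, h2⟩
  simp [this]

lemma twoSiteOp_posSemidef {M : Matrix (Fin 2 × Fin 2) (Fin 2 × Fin 2) ℂ}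
    (hM : M.PosSemidef) (a b : ι) (hab : a ≠ b) : (twoSiteOp M a b).PosSemidef := by
  rw [twoSiteOp_eq M a b hab]
  open scoped MatrixOrder Matrix.Norms.L2Operator in
  obtain ⟨B, rfl⟩ := CStarAlgebra.nonneg_iff_eq_star_mul_self.mp hM.nonneg
  rw [Matrix.star_eq_conjTranspose]
  have h1 : ((Bᴴ * B) ⊗ₖ (1 : Matrix ({y : ι // y ≠ a ∧ y ≠ b} → Fin 2)
        ({y : ι // y ≠ a ∧ y ≠ b} → Fin 2) ℂ))
      = (B ⊗ₖ (1 : Matrix ({y : ι // y ≠ a ∧ y ≠ b} → Fin 2)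
          ({y : ι // y ≠ a ∧ y ≠ b} → Fin 2) ℂ))ᴴ
        * (B ⊗ₖ (1 : Matrix ({y : ι // y ≠ a ∧ y ≠ b} → Fin 2)
            ({y : ι // y ≠ a ∧ y ≠ b} → Fin 2) ℂ)) := by
    rw [conjTranspose_kronecker, Matrix.conjTranspose_one, ← Matrix.mul_kronecker_mul, one_mul]
  rw [h1]
  exact (Matrix.posSemidef_conjTranspose_mul_self _).submatrix _

lemma prod_split (a b : ι) (hab : a ≠ b) (g : ι → ℂ) :
    ∏ x, g x = g a * g b * ∏ y : {y : ι // y ≠ a ∧ y ≠ b}, g y.1 := by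
  have hb : b ∈ Finset.univ.erase a := Finset.mem_erase.mpr ⟨hab.symm, Finset.mem_univ b⟩
  rw [← Finset.mul_prod_erase Finset.univ g (Finset.mem_univ a),
    ← Finset.mul_prod_erase _ g hb, ← mul_assoc]
  congr 1
  exact (Finset.prod_subtype ((Finset.univ.erase a).erase b)
    (p := fun y => y ≠ a ∧ y ≠ b)
    (fun y => by simp [Finset.mem_erase, and_comm]) g)

lemma twoSiteOp_mulVec_prod (M : Matrix (Fin 2 × Fin 2) (Fin 2 × Fin 2) ℂ)
    (a b : ι) (hab : a ≠ b) (f : ι → Fin 2 → ℂ)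
    (hM : M *ᵥ (fun p => f a p.1 * f b p.2) = 0) :
    (twoSiteOp M a b) *ᵥ (fun σ => ∏ x, f x (σ x)) = 0 := by
  rw [twoSiteOp_eq M a b hab, Matrix.submatrix_mulVec_equiv]
  have hv : ((fun σ => ∏ x, f x (σ x)) ∘ (siteEquiv a b hab).symm)
      = fun p : (Fin 2 × Fin 2) × ({y : ι // y ≠ a ∧ y ≠ b} → Fin 2) =>
        (f a p.1.1 * f b p.1.2) * ∏ y : {y : ι // y ≠ a ∧ y ≠ b}, f y.1 (p.2 y) := by
    funext p
    have := prod_split a b hab (fun x => f x ((siteEquiv a b hab).symm p x))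
    simp only [Function.comp_apply]
    rw [this]
    congr 1
    · congr 1
      · simp [siteEquiv]
      · simp [siteEquiv, hab.symm]
    · exact Finset.prod_congr rfl fun y _ => by simp [siteEquiv, y.2.1, y.2.2]
  rw [hv]
  have hz : ((M ⊗ₖ (1 : Matrix ({y : ι // y ≠ a ∧ y ≠ b} → Fin 2)
      ({y : ι // y ≠ a ∧ y ≠ b} → Fin 2) ℂ)) *ᵥ fun p =>
        (f a p.1.1 * f b p.1.2) * ∏ y : {y : ι // y ≠ a ∧ y ≠ b}, f y.1 (p.2 y)) = 0 := by
    funext ⟨p, ρ⟩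
    have : ∀ p' : Fin 2 × Fin 2, ∀ ρ', M p p' *
        (if ρ = ρ' then (1:ℂ) else 0) * ((f a p'.1 * f b p'.2) * ∏ y, f y.1 (ρ' y))
        = (if ρ' = ρ then (M p p' * (f a p'.1 * f b p'.2)) * ∏ y, f y.1 (ρ y) else 0) := by
      intro p' ρ'
      by_cases h : ρ' = ρ
      · subst h; simp; ring
      · simp [h, Ne.symm h]
    simp only [Matrix.mulVec, dotProduct, Fintype.sum_prod_type,
      Matrix.kroneckerMap_apply, Matrix.one_apply, Pi.zero_apply]
    simp only [this, Finset.sum_ite_eq', Finset.mem_univ, if_true]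
    simp only [← Finset.sum_mul]
    have hMp := congrFun hM p
    simp only [Matrix.mulVec, dotProduct, Pi.zero_apply,
      Fintype.sum_prod_type] at hMp
    rw [hMp, zero_mul]
  rw [hz]
  funext σ
  simp

end TwoSite


/-- For every `q ∈ (0,1)`, every `L ≥ 1` and every `z ∈ ℂ`, the kink
product vector `φ(z) = ⊗_{x=0}^{L}(|↑⟩ + z q^x |↓⟩)` satisfies `H_L φ(z) = 0`;
moreover `H_L` is positive semidefinite, so `0` is the smallest eigenvalue of `H_L`
and every `φ(z)` (being nonzero) is a ground state vector of `H_L`. -/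
theorem HChain_kink_ground_state (q : ℝ) (hq0 : 0 < q) (hq1 : q < 1)
    (L : ℕ) (hL : 1 ≤ L) (z : ℂ) :
    (HChain L q).mulVec (phi L q z) = 0 ∧ (HChain L q).PosSemidef ∧
      phi L q z ≠ 0 ∧
      (0 : ℂ) ∈ spectrum ℂ (HChain L q) ∧
      ∀ μ : ℂ, μ ∈ spectrum ℂ (HChain L q) → 0 ≤ μ.re := by
  -- mulVec = 0
  have hker : (HChain L q).mulVec (phi L q z) = 0 := by
    have : (HChain L q).mulVec (phi L q z)
        = ∑ x : Fin L, (twoSiteOp (hKink q) x.castSucc x.succ) *ᵥ (phi L q z) := by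
      exact map_sum (Matrix.mulVec.addMonoidHomLeft (phi L q z)) _ _
    rw [this]
    refine Finset.sum_eq_zero fun x _ => ?_
    have hab : (x.castSucc : Fin (L+1)) ≠ x.succ := (Fin.castSucc_lt_succ (i := x)).ne
    have hfa : (![1, z * (q:ℂ) ^ ((x.castSucc : Fin (L+1)) : ℕ)] : Fin 2 → ℂ)
        = ![1, z * (q:ℂ) ^ (x : ℕ)] := by
      simp [Fin.coe_castSucc]
    have hfb : (![1, z * (q:ℂ) ^ ((x.succ : Fin (L+1)) : ℕ)] : Fin 2 → ℂ)
        = ![1, (q:ℂ) * (z * (q:ℂ) ^ (x : ℕ))] := by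
      funext i
      fin_cases i
      · rfl
      · simp [Fin.val_succ, pow_succ]; ring
    have hM : (hKink q) *ᵥ (fun p =>
        (![1, z * (q:ℂ) ^ ((x.castSucc : Fin (L+1)) : ℕ)] : Fin 2 → ℂ) p.1 *
        (![1, z * (q:ℂ) ^ ((x.succ : Fin (L+1)) : ℕ)] : Fin 2 → ℂ) p.2) = 0 := by
      rw [hfa, hfb]
      exact hKink_mulVec q hq0 (z * (q:ℂ) ^ (x : ℕ))
    exact twoSiteOp_mulVec_prod (hKink q) x.castSucc x.succ hab
      (fun y => ![1, z * (q:ℂ) ^ (y : ℕ)]) hM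
  -- positive semidefinite
  have hpsd : (HChain L q).PosSemidef := by
    unfold HChain
    refine Finset.sum_induction _ _ (fun A B hA hB => hA.add hB) ?_ ?_
    · constructor
      · simp [Matrix.IsHermitian]
      · intro x; simp
    · intro x _
      exact twoSiteOp_posSemidef (hKink_posSemidef q hq0) _ _ (Fin.castSucc_lt_succ (i := x)).ne
  -- phi ≠ 0
  have hphi : phi L q z ≠ 0 := by
    intro h
    have := congrFun h (fun _ => 0)
    simp [phi] at this
  -- det = 0
  have hdet : (HChain L q).det = 0 :=
    Matrix.exists_mulVec_eq_zero_iff.mp ⟨phi L q z, hphi, hker⟩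
  refine ⟨hker, hpsd, hphi, ?_, ?_⟩
  · -- 0 ∈ spectrum
    rw [spectrum.mem_iff]
    intro h
    rw [map_zero, zero_sub, IsUnit.neg_iff, Matrix.isUnit_iff_isUnit_det, hdet] at h
    exact (not_isUnit_zero h : False)
  · -- spectrum nonneg
    intro μ hμ
    rw [spectrum.mem_iff] at hμ
    have hdet2 : (algebraMap ℂ (Matrix (Fin (L+1) → Fin 2) (Fin (L+1) → Fin 2) ℂ) μ
        - HChain L q).det = 0 := by
      by_contra hd
      exact hμ ((Matrix.isUnit_iff_isUnit_det _).mpr (isUnit_iff_ne_zero.mpr hd))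
    obtain ⟨v, hv, hveq⟩ := Matrix.exists_mulVec_eq_zero_iff.mpr hdet2
    have hMv : (HChain L q) *ᵥ v = μ • v := by
      rw [Matrix.sub_mulVec] at hveq
      have h2 : algebraMap ℂ (Matrix (Fin (L+1) → Fin 2) (Fin (L+1) → Fin 2) ℂ) μ *ᵥ v
          = μ • v := by
        rw [Algebra.algebraMap_eq_smul_one, Matrix.smul_mulVec, Matrix.one_mulVec]
      rw [h2] at hveq
      exact (sub_eq_zero.mp hveq).symm
    have hq2 := hpsd.dotProduct_mulVec_nonneg v
    rw [hMv] at hq2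
    have hrr : star v ⬝ᵥ (μ • v) = μ * (star v ⬝ᵥ v) := by
      rw [dotProduct_smul]; simp [smul_eq_mul]
    rw [hrr] at hq2
    set r : ℂ := star v ⬝ᵥ v with hrdef
    have hr0 : 0 ≤ r := by
      apply Finset.sum_nonneg
      intro i _
      exact star_mul_self_nonneg _
    have hrne : r ≠ 0 := fun h0 => hv (dotProduct_star_self_eq_zero.mp h0)
    rw [Complex.le_def] at hq2 hr0
    simp only [Complex.zero_re, Complex.zero_im, Complex.mul_re, Complex.mul_im] at hq2 hr0
    have hrim : r.im = 0 := hr0.2.symm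
    have hrre : 0 < r.re := by
      rcases lt_or_eq_of_le hr0.1 with h | h
      · exact h
      · exfalso; exact hrne (Complex.ext h.symm hrim)
    rw [hrim] at hq2
    nlinarith [hq2.1, hq2.2]
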